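/- For the braid relation in a Coxeter group with m(i,j) alternating factors, and any parameters t₂,…,t_{m(i,j)} > 0, there is a unique tuple (t₁′,…,t_{m(i,j)}′) of nonnegative reals satisfying x_i(0) x_j(t₂) x_i(t₃) ⋯ = x_j(t₁′) x_i(t₂′) x_j(t₃′) ⋯ , namely t₁′ = t₂, t₂′ = t₃, …, t_{m(i,j)−1}′ = t_{m(i,j)}, and t_{m(i,j)}′ = 0, where x_i(t) = exp(t e_i) are the Chevalley one-parameter subgroups in the unipotent radical N of a Borel subgroup of a semisimple simply connected algebraic group split over ℝ. -/

import Mathlib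

/-- The Chevalley one-parameter unipotent element `x_{ij}(t) = 1 + t·E_{ij}` in the
unipotent radical of the Borel subgroup of upper triangular matrices (type A). -/
noncomputable def chevGen (n i j : ℕ) (hi : i < n) (hj : j < n) (t : ℝ) :
    Matrix (Fin n) (Fin n) ℝ :=
  1 + Matrix.single ⟨i, hi⟩ ⟨j, hj⟩ t

open Matrix in
lemma aux_prod3 {n : ℕ} (a b c : Fin n) (hca : c ≠ a) (hcb : c ≠ b) (s u v : ℝ) :
    (1 + single b c s) * (1 + single a b u) * (1 + single b c v)
      = 1 + single a b u + single b c (s + v) + single a c (u * v) := by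
  simp only [add_mul, mul_add, one_mul, mul_one, zero_mul, add_zero,
    Matrix.single_mul_single_of_ne _ _ _ _ hca, Matrix.single_mul_single_of_ne _ _ _ _ hcb,
    Matrix.single_mul_single_same]
  rw [Matrix.single_add]
  abel

/-- For the braid relation with `m(i,j) = 3` alternating factors
(simple roots `i`, `j = i+1` of a simply laced pair, realized in the unipotent radical of
a Borel subgroup via `x_i(t) = exp(t e_i) = 1 + t E_{i,i+1}`), and any parameters
`t₂, t₃ > 0`, the unique tuple `(t₁', t₂', t₃')` of nonnegative reals satisfying
`x_i(0) x_j(t₂) x_i(t₃) = x_j(t₁') x_i(t₂') x_j(t₃')` is `(t₂, t₃, 0)`. -/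
theorem chevalley_braid_unique (n i : ℕ) (h : i + 2 < n)
    (t₂ t₃ : ℝ) (ht₂ : 0 < t₂) (ht₃ : 0 < t₃)
    (t₁' t₂' t₃' : ℝ) (h₁ : 0 ≤ t₁') (h₂ : 0 ≤ t₂') (h₃ : 0 ≤ t₃') :
    (chevGen n i (i + 1) (by omega) (by omega) 0 *
        chevGen n (i + 1) (i + 2) (by omega) (by omega) t₂ *
        chevGen n i (i + 1) (by omega) (by omega) t₃ =
      chevGen n (i + 1) (i + 2) (by omega) (by omega) t₁' *
        chevGen n i (i + 1) (by omega) (by omega) t₂' *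
        chevGen n (i + 1) (i + 2) (by omega) (by omega) t₃') ↔
    (t₁' = t₂ ∧ t₂' = t₃ ∧ t₃' = 0) := by
  set a : Fin n := ⟨i, by omega⟩ with ha
  set b : Fin n := ⟨i + 1, by omega⟩ with hb
  set c : Fin n := ⟨i + 2, by omega⟩ with hc
  have hab : a ≠ b := by simp [ha, hb, Fin.ext_iff]
  have hbc : b ≠ c := by simp [hb, hc, Fin.ext_iff]
  have hca : c ≠ a := by simp [ha, hc, Fin.ext_iff]
  have hac : a ≠ c := hca.symm
  have keyL : chevGen n i (i + 1) (by omega) (by omega) 0 *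
        chevGen n (i + 1) (i + 2) (by omega) (by omega) t₂ *
        chevGen n i (i + 1) (by omega) (by omega) t₃
      = 1 + Matrix.single a b t₃ + Matrix.single b c t₂ := by
    show (1 + Matrix.single a b 0) * (1 + Matrix.single b c t₂) *
        (1 + Matrix.single a b t₃) = _
    simp only [Matrix.single_zero, add_zero, add_mul, mul_add, one_mul, mul_one,
      Matrix.single_mul_single_of_ne _ _ _ _ hca]
    abel
  have keyR : chevGen n (i + 1) (i + 2) (by omega) (by omega) t₁' *
        chevGen n i (i + 1) (by omega) (by omega) t₂' *
        chevGen n (i + 1) (i + 2) (by omega) (by omega) t₃'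
      = 1 + Matrix.single a b t₂' + Matrix.single b c (t₁' + t₃')
          + Matrix.single a c (t₂' * t₃') := by
    exact aux_prod3 a b c hca hbc.symm t₁' t₂' t₃'
  rw [keyL, keyR]
  constructor
  · intro hEq
    have e1 := Matrix.ext_iff.2 hEq a b
    have e2 := Matrix.ext_iff.2 hEq b c
    have e3 := Matrix.ext_iff.2 hEq a c
    simp only [Matrix.add_apply, Matrix.one_apply, Matrix.single, Matrix.of_apply,
      ha, hb, hc, Fin.mk.injEq] at e1 e2 e3
    norm_num at e1 e2 e3
    have ht₃' : t₃' = 0 := by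
      rcases e3 with h0 | h0
      · linarith
      · exact h0
    exact ⟨by linarith [e2], by linarith [e1], ht₃'⟩
  · rintro ⟨rfl, rfl, rfl⟩
    simp
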